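/- Define |C_{n,k}| = 2·Σ_{i=0}^{2n} N_{i,(2n-i)k} for integers n ≥ 3 odd and k ≥ 2, where N_{a,b} is the binary necklace number (with the convention N_{0,b} = 1 and N_{a,0} = 1). Then for n = 3: |C_{3,k}| = (1/60)k⁴ + (5/6)k³ + (67/12)k² + (61/6)k + 57/5 + [1 if 2|k] + [8/5 if 5|k]. -/

import Mathlib

open Finset

/-- The rotation relation on colourings of `Fin (a + b)` by `Bool`
(`true` = black, `false` = red) with exactly `a` black beads. -/
def necklaceRel (a b : ℕ)
    (f g : {f : Fin (a + b) → Bool // (Finset.univ.filter fun i => f i = true).card = a}) :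
    Prop :=
  ∃ r : Fin (a + b), ∀ i, g.1 i = f.1 (i + r)

/-- The number of necklaces with `a` black and `b` red beads. -/
noncomputable def necklaceNum (a b : ℕ) : ℕ :=
  Nat.card (Quot (necklaceRel a b))


/-- The number of tilings in the family `C_{n,k}^t`. -/
noncomputable def Cnk (n k : ℕ) : ℕ :=
  2 * ∑ i ∈ Finset.range (2 * n + 1), necklaceNum i ((2 * n - i) * k)

open scoped Fin.NatCast Fin.IntCast Fin.CommRing

section general
variable {n : ℕ}

/-- number of true values -/
def cnt {n : ℕ} (f : Fin n → Bool) : ℕ := (Finset.univ.filter fun i => f i = true).card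

variable [NeZero n]

lemma cnt_shift (f : Fin n → Bool) (r : Fin n) : cnt (fun i => f (i + r)) = cnt f := by
  unfold cnt
  apply Finset.card_bij' (fun i _ => i + r) (fun i _ => i - r)
  · intro i hi; simp_all
  · intro i hi; simp_all [sub_add_cancel]
  · intro i _; simp
  · intro i _; simp

/-- invariance of `f` under rotation by `c` -/
def RotInv (f : Fin n → Bool) (c : Fin n) : Prop := ∀ i, f (i + c) = f i

lemma rotInv_zero (f : Fin n → Bool) : RotInv f 0 := fun i => by rw [add_zero]

lemma rotInv_add {f : Fin n → Bool} {c c' : Fin n} (h : RotInv f c) (h' : RotInv f c') :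
    RotInv f (c + c') := fun i => by
  rw [← add_assoc]
  rw [h' (i + c)]  -- wrong? h' : f (x + c') = f x with x := i + c
  exact h i

lemma rotInv_neg {f : Fin n → Bool} {c : Fin n} (h : RotInv f c) : RotInv f (-c) := fun i => by
  have := h (i + -c)
  rw [neg_add_cancel_right] at this
  exact this.symm

/-- the subgroup of invariant rotations -/
def invSub (f : Fin n → Bool) : AddSubgroup (Fin n) where
  carrier := {c | RotInv f c}
  zero_mem' := rotInv_zero f
  add_mem' := rotInv_add
  neg_mem' := rotInv_neg

lemma rotInv_gcd_iff (f : Fin n → Bool) (r : Fin n) :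
    RotInv f r ↔ RotInv f ((Nat.gcd r.val n : ℕ) : Fin n) := by
  have hd : ((Nat.gcd r.val n : ℕ) : Fin n) ∈ AddSubgroup.zmultiples r := by
    refine ⟨(Nat.gcdA r.val n), ?_⟩
    have h := Nat.gcd_eq_gcd_ab r.val n
    have h2 := congrArg (Int.cast : ℤ → Fin n) h
    push_cast at h2
    rw [Fin.natCast_self] at h2
    show (Nat.gcdA r.val n) • r = _
    rw [zsmul_eq_mul, mul_comm, h2]; ring
  have hr : r ∈ AddSubgroup.zmultiples ((Nat.gcd r.val n : ℕ) : Fin n) := by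
    refine ⟨(r.val / Nat.gcd r.val n : ℕ), ?_⟩
    have h3 : ((r.val / Nat.gcd r.val n : ℕ) * (Nat.gcd r.val n : ℕ) : ℕ) = r.val :=
      Nat.div_mul_cancel (Nat.gcd_dvd_left _ _)
    show ((r.val / Nat.gcd r.val n : ℕ) : ℤ) • _ = r
    rw [natCast_zsmul, nsmul_eq_mul, ← Nat.cast_mul, h3, Fin.cast_val_eq_self]
  constructor
  · intro h
    have h4 : AddSubgroup.zmultiples r ≤ invSub f := by
      rw [AddSubgroup.zmultiples_le]; exact h
    exact h4 hd
  · intro h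
    have h4 : AddSubgroup.zmultiples ((Nat.gcd r.val n : ℕ) : Fin n) ≤ invSub f := by
      rw [AddSubgroup.zmultiples_le]; exact h
    exact h4 hr

end general

section general2
variable {n : ℕ} [NeZero n]

def resid {n : ℕ} (d : ℕ) (hd0 : 0 < d) : Fin n → Fin d := fun i => ⟨i.val % d, Nat.mod_lt _ hd0⟩

lemma val_natCast_fin (d : ℕ) (hdn : d < n) : ((d : ℕ) : Fin n).val = d := by
  simp [Fin.val_natCast, Nat.mod_eq_of_lt hdn]

lemma rotInv_iff_mod (f : Fin n → Bool) (d : ℕ) (hd : d ∣ n) (hd0 : 0 < d) (hdn : d ≤ n) :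
    RotInv f ((d : ℕ) : Fin n) ↔ ∀ i : Fin n, f i = f (Fin.castLE hdn (resid d hd0 i)) := by
  have hn0 : 0 < n := Nat.pos_of_ne_zero (NeZero.ne n)
  rcases eq_or_lt_of_le hdn with heq | hlt
  · subst heq
    constructor
    · intro _ i
      congr 1
      exact Fin.ext (by simp [resid, Nat.mod_eq_of_lt i.2])
    · intro _ i; rw [Fin.natCast_self, add_zero]
  · have hdval : ((d : ℕ) : Fin n).val = d := val_natCast_fin d hlt
    constructor
    · intro hInv
      suffices H : ∀ m : ℕ, (hm : m < n) →
          f ⟨m, hm⟩ = f ⟨m % d, lt_of_lt_of_le (Nat.mod_lt _ hd0) hdn⟩ by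
        intro i
        have := H i.val i.2
        simp only [Fin.eta] at this
        rw [this]; rfl
      intro m
      induction m using Nat.strong_induction_on with
      | _ m ih =>
        intro hm
        by_cases hmd : m < d
        · congr 1; exact Fin.ext (Nat.mod_eq_of_lt hmd).symm
        · push_neg at hmd
          have h1 : m - d < n := by omega
          have h2 : (⟨m - d, h1⟩ : Fin n) + ((d : ℕ) : Fin n) = ⟨m, hm⟩ := by
            apply Fin.ext
            rw [Fin.add_def]
            show (m - d + ((d:ℕ):Fin n).val) % n = m
            rw [hdval, Nat.sub_add_cancel hmd, Nat.mod_eq_of_lt hm]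
          have h3 := hInv ⟨m - d, h1⟩
          rw [h2] at h3
          have h4 := ih (m - d) (by omega) h1
          rw [h3, h4]
          congr 1
          apply Fin.ext
          show (m - d) % d = m % d
          conv_rhs => rw [← Nat.sub_add_cancel hmd, Nat.add_mod_right]
    · intro H i
      rw [H (i + ((d : ℕ) : Fin n)), H i]
      congr 1
      apply Fin.ext
      show (i + ((d:ℕ):Fin n)).val % d = i.val % d
      rw [Fin.add_def, hdval, Nat.mod_mod_of_dvd _ hd, Nat.add_mod_right]


end general2

lemma cnt_resid {n : ℕ} [NeZero n] (d : ℕ) (hd : d ∣ n) (hd0 : 0 < d) (g : Fin d → Bool) :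
    cnt (fun i : Fin n => g ⟨i.val % d, Nat.mod_lt _ hd0⟩) = (n / d) * cnt g := by
  unfold cnt
  have hn : d * (n / d) = n := Nat.mul_div_cancel' hd
  rw [show (n/d) * (Finset.univ.filter fun j => g j = true).card
      = ((Finset.univ : Finset (Fin (n/d))) ×ˢ (Finset.univ.filter fun j => g j = true)).card by
    rw [Finset.card_product, Finset.card_univ, Fintype.card_fin]]
  refine Finset.card_bij' (fun (i : Fin n) _ => ((⟨i.val / d, by
        apply Nat.div_lt_of_lt_mul; rw [hn]; exact i.2⟩ : Fin (n/d)),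
        (⟨i.val % d, Nat.mod_lt _ hd0⟩ : Fin d)))
    (fun p _ => (⟨p.2.val + p.1.val * d, by
        have h1 := p.1.2; have h2 := p.2.2
        have h3 : (p.1.val + 1) * d ≤ (n/d) * d := Nat.mul_le_mul_right d h1
        rw [Nat.succ_mul, Nat.div_mul_cancel hd] at h3
        omega⟩ : Fin n)) ?hi ?hj ?left ?right
  case hi =>
    intro i hi
    simp only [Finset.mem_product, Finset.mem_univ, true_and, Finset.mem_filter, and_true]
    exact (Finset.mem_filter.mp hi).2
  case hj =>
    intro p hp
    rw [Finset.mem_product] at hp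
    have hp2 := (Finset.mem_filter.mp hp.2).2
    rw [Finset.mem_filter]
    refine ⟨Finset.mem_univ _, ?_⟩
    show g ⟨(p.2.val + p.1.val * d) % d, Nat.mod_lt _ hd0⟩ = true
    have h2 := p.2.2
    have hmod : (p.2.val + p.1.val * d) % d = p.2.val := by
      rw [Nat.add_mul_mod_self_right, Nat.mod_eq_of_lt h2]
    have h4 : (⟨(p.2.val + p.1.val * d) % d, Nat.mod_lt _ hd0⟩ : Fin d) = p.2 := Fin.ext hmod
    rw [h4]
    exact hp2
  case left =>
    intro i _
    apply Fin.ext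
    show i.val % d + (i.val / d) * d = i.val
    rw [Nat.mul_comm (i.val/d) d]
    exact Nat.mod_add_div _ _
  case right =>
    intro p _
    have h2 := p.2.2
    apply Prod.ext
    · apply Fin.ext
      show (p.2.val + p.1.val * d) / d = p.1.val
      rw [Nat.add_mul_div_right _ _ hd0, Nat.div_eq_of_lt h2, Nat.zero_add]
    · apply Fin.ext
      show (p.2.val + p.1.val * d) % d = p.2.val
      rw [Nat.add_mul_mod_self_right, Nat.mod_eq_of_lt h2]

lemma card_cnt_eq (d a' : ℕ) : Nat.card {g : Fin d → Bool // cnt g = a'} = d.choose a' := by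
  have e : {g : Fin d → Bool // cnt g = a'} ≃ {s : Finset (Fin d) // s.card = a'} := by
    refine ⟨fun g => ⟨Finset.univ.filter fun j => g.1 j = true, g.2⟩,
      fun s => ⟨fun j => decide (j ∈ s.1), ?_⟩, fun g => ?_, fun s => ?_⟩
    · have : (Finset.univ.filter fun j => decide (j ∈ s.1) = true) = s.1 := by
        ext j; simp
      unfold cnt; rw [this]; exact s.2
    · ext j
      simp
    · ext j
      simp
  rw [Nat.card_congr e, Nat.card_eq_fintype_card, Fintype.card_finset_len, Fintype.card_fin]

lemma card_inv_cnt {n : ℕ} [NeZero n] (d a : ℕ) (hd : d ∣ n) (hd0 : 0 < d) :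
    Nat.card {f : Fin n → Bool // RotInv f ((d : ℕ) : Fin n) ∧ cnt f = a} =
      if (n / d) ∣ a then d.choose (a / (n / d)) else 0 := by
  have hn0 : 0 < n := Nat.pos_of_ne_zero (NeZero.ne n)
  have hdn : d ≤ n := Nat.le_of_dvd hn0 hd
  set e := n / d with he
  have he0 : 0 < e := Nat.div_pos hdn hd0
  -- the two maps
  set Φ : (Fin n → Bool) → (Fin d → Bool) := fun f j => f (Fin.castLE hdn j) with hΦ
  set Ψ : (Fin d → Bool) → (Fin n → Bool) := fun g i => g ⟨i.val % d, Nat.mod_lt _ hd0⟩ with hΨ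
  have keyΨ : ∀ g, Ψ (Φ g) = fun i => (Φ g) ⟨i.val % d, Nat.mod_lt _ hd0⟩ := fun g => rfl
  have hfix : ∀ f : Fin n → Bool, RotInv f ((d : ℕ) : Fin n) → Ψ (Φ f) = f := by
    intro f hf
    funext i
    exact ((rotInv_iff_mod f d hd hd0 hdn).mp hf i).symm
  have hΨfix : ∀ g : Fin d → Bool, RotInv (Ψ g) ((d : ℕ) : Fin n) := by
    intro g
    rw [rotInv_iff_mod _ d hd hd0 hdn]
    intro i
    show g _ = g _
    congr 1
    apply Fin.ext
    show i.val % d = ((Fin.castLE hdn ⟨i.val % d, Nat.mod_lt _ hd0⟩) : Fin n).val % d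
    show i.val % d = (i.val % d) % d
    rw [Nat.mod_mod_of_dvd]
    exact dvd_refl d
  have hcntΨ : ∀ g : Fin d → Bool, cnt (Ψ g) = e * cnt g := fun g => cnt_resid d hd hd0 g
  have hΦΨ : ∀ g : Fin d → Bool, Φ (Ψ g) = g := by
    intro g
    funext j
    show g ⟨((Fin.castLE hdn j) : Fin n).val % d, _⟩ = g j
    congr 1
    apply Fin.ext
    show j.val % d = j.val
    exact Nat.mod_eq_of_lt j.2
  by_cases hdvd : e ∣ a
  · rw [if_pos hdvd]
    have E : {f : Fin n → Bool // RotInv f ((d : ℕ) : Fin n) ∧ cnt f = a} ≃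
        {g : Fin d → Bool // cnt g = a / e} := by
      refine ⟨fun f => ⟨Φ f.1, ?_⟩, fun g => ⟨Ψ g.1, hΨfix g.1, ?_⟩, fun f => ?_, fun g => ?_⟩
      · obtain ⟨f, hR, hc⟩ := f
        have h1 : cnt f = e * cnt (Φ f) := by
          conv_lhs => rw [← hfix f hR]
          exact hcntΨ (Φ f)
        have h2 : a = cnt (Φ f) * e := by rw [← hc, h1, mul_comm]
        have h3 := Nat.mul_div_cancel (cnt (Φ f)) he0
        rw [← h2] at h3
        exact h3.symm
      · rw [hcntΨ, g.2, Nat.mul_div_cancel' hdvd]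
      · exact Subtype.ext (hfix f.1 f.2.1)
      · exact Subtype.ext (hΦΨ g.1)
    rw [Nat.card_congr E, card_cnt_eq]
  · rw [if_neg hdvd]
    rw [Nat.card_eq_zero]
    left
    constructor
    intro f
    apply hdvd
    obtain ⟨f, hR, hc⟩ := f
    have h1 : cnt f = e * cnt (Φ f) := by
      conv_lhs => rw [← hfix f hR]
      exact hcntΨ (Φ f)
    exact ⟨cnt (Φ f), by rw [← hc]; exact h1⟩

section necklace
variable (a b : ℕ) [NeZero (a + b)]

abbrev NeckX := {f : Fin (a + b) → Bool // (Finset.univ.filter fun i => f i = true).card = a}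

instance : AddAction (Fin (a + b)) (NeckX a b) where
  vadd r f := ⟨fun i => f.1 (i + r), (cnt_shift f.1 r).trans f.2⟩
  zero_vadd f := Subtype.ext (funext fun i => by show f.1 (i + 0) = f.1 i; rw [add_zero])
  add_vadd g h f := Subtype.ext (funext fun i => by
    show f.1 (i + (g + h)) = f.1 (i + g + h)
    rw [add_assoc])

lemma neckX_vadd_apply (r : Fin (a + b)) (f : NeckX a b) (i : Fin (a + b)) :
    (r +ᵥ f).1 i = f.1 (i + r) := rfl

def quotEquiv : Quot (necklaceRel a b) ≃ Quotient (AddAction.orbitRel (Fin (a + b)) (NeckX a b)) := by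
  apply Quot.congrRight
  intro f g
  show necklaceRel a b f g ↔ f ∈ AddAction.orbit (Fin (a + b)) g
  constructor
  · rintro ⟨r, hr⟩
    refine ⟨-r, Subtype.ext (funext fun i => ?_)⟩
    show g.1 (i + -r) = f.1 i
    rw [hr (i + -r), neg_add_cancel_right]
  · rintro ⟨r, hr⟩
    refine ⟨-r, fun i => ?_⟩
    rw [← hr]
    show g.1 i = g.1 (i + -r + r)
    rw [neg_add_cancel_right]

noncomputable instance : Fintype (Quotient (AddAction.orbitRel (Fin (a + b)) (NeckX a b))) :=
  Fintype.ofFinite _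

lemma burnside :
    necklaceNum a b * (a + b) =
      ∑ r : Fin (a + b),
        (if ((a + b) / Nat.gcd r.val (a + b)) ∣ a then
          (Nat.gcd r.val (a + b)).choose (a / ((a + b) / Nat.gcd r.val (a + b))) else 0) := by
  classical
  have hb := AddAction.sum_card_fixedBy_eq_card_orbits_mul_card_addGroup (Fin (a + b)) (NeckX a b)
  have h1 : necklaceNum a b = Fintype.card (Quotient (AddAction.orbitRel (Fin (a + b)) (NeckX a b))) := by
    rw [necklaceNum, Nat.card_congr (quotEquiv a b), Nat.card_eq_fintype_card]
  rw [Fintype.card_fin] at hb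
  rw [h1, ← hb]
  apply Finset.sum_congr rfl
  intro r _
  have hn0 : 0 < a + b := Nat.pos_of_ne_zero (NeZero.ne _)
  have hgd : Nat.gcd r.val (a + b) ∣ (a + b) := Nat.gcd_dvd_right _ _
  have hg0 : 0 < Nat.gcd r.val (a + b) := Nat.gcd_pos_of_pos_right _ hn0
  rw [← card_inv_cnt (Nat.gcd r.val (a + b)) a hgd hg0]
  rw [← Nat.card_eq_fintype_card]
  apply Nat.card_congr
  refine ⟨fun x => ⟨x.1.1, ?_, x.1.2⟩, fun f => ⟨⟨f.1, f.2.2⟩, ?_⟩, fun x => rfl, fun f => rfl⟩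
  · have hfix : (r +ᵥ x.1 : NeckX a b) = x.1 := x.2
    have : RotInv x.1.1 r := by
      intro i
      have := congrArg (fun (z : NeckX a b) => z.1 i) hfix
      exact this
    exact (rotInv_gcd_iff x.1.1 r).mp this
  · show r +ᵥ (⟨f.1, f.2.2⟩ : NeckX a b) = ⟨f.1, f.2.2⟩
    apply Subtype.ext
    funext i
    show f.1 (i + r) = f.1 i
    exact ((rotInv_gcd_iff f.1 r).mpr f.2.1) i
end necklace

def Fct (a n r : ℕ) : ℕ :=
  if (n / Nat.gcd r n) ∣ a then (Nat.gcd r n).choose (a / (n / Nat.gcd r n)) else 0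

lemma sum_Fct_subset (n a : ℕ) (s : Finset ℕ) (hs : s ⊆ Finset.range n)
    (hz : ∀ r, r < n → r ∉ s → ¬ (n / Nat.gcd r n) ∣ a) :
    ∑ r ∈ Finset.range n, Fct a n r = ∑ r ∈ s, Fct a n r :=
  (Finset.sum_subset hs fun r hr hns =>
    if_neg (hz r (Finset.mem_range.mp hr) hns)).symm

lemma Fct_zero (a n : ℕ) (hn : 0 < n) : Fct a n 0 = n.choose a := by
  unfold Fct
  rw [Nat.gcd_zero_left, Nat.div_self hn]
  simp

lemma Fct_pt (a n r g e : ℕ) (hg : Nat.gcd r n = g) (hne : n = g * e) (hg0 : 0 < g)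
    (hea : e ∣ a) : Fct a n r = g.choose (a / e) := by
  unfold Fct
  rw [hg, hne, Nat.mul_div_cancel_left _ hg0, if_pos hea]

lemma point_analysis (n a r : ℕ) (hr : r < n) (hn0 : 0 < n)
    (hdvd : (n / Nat.gcd r n) ∣ a) :
    ∃ e t, e ∣ a ∧ 0 < e ∧ Nat.gcd r n * e = n ∧ r = Nat.gcd r n * t ∧ t < e := by
  have hgn := Nat.gcd_dvd_right r n
  have hgr := Nat.gcd_dvd_left r n
  have hg0 : 0 < Nat.gcd r n := Nat.gcd_pos_of_pos_right _ hn0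
  refine ⟨n / Nat.gcd r n, r / Nat.gcd r n, hdvd,
    Nat.div_pos (Nat.le_of_dvd hn0 hgn) hg0, Nat.mul_div_cancel' hgn,
    (Nat.mul_div_cancel' hgr).symm, Nat.div_lt_div_of_lt_of_dvd hgn hr⟩

lemma sum0 (n : ℕ) (hn : 0 < n) : ∑ r ∈ Finset.range n, Fct 0 n r = n := by
  have h : ∀ r ∈ Finset.range n, Fct 0 n r = 1 := by
    intro r _
    unfold Fct
    rw [if_pos (dvd_zero _), Nat.zero_div, Nat.choose_zero_right]
  rw [Finset.sum_congr rfl h, Finset.sum_const, Finset.card_range, smul_eq_mul, mul_one]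

lemma sum1 (n : ℕ) (hn : 0 < n) : ∑ r ∈ Finset.range n, Fct 1 n r = n := by
  rw [sum_Fct_subset n 1 {0}]
  · rw [Finset.sum_singleton, Fct_zero 1 n hn, Nat.choose_one_right]
  · intro x hx
    simp only [Finset.mem_singleton] at hx
    rw [Finset.mem_range]
    omega
  · intro r hr hns hdvd
    obtain ⟨e, t, hea, he0, hmul, hrt, hte⟩ := point_analysis n 1 r hr hn hdvd
    have he1 : e = 1 := Nat.dvd_one.mp hea
    subst he1
    interval_cases t
    simp at hrt
    simp [hrt] at hns

lemma sum2' (k : ℕ) :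
    ∑ r ∈ Finset.range (4 * k + 2), Fct 2 (4 * k + 2) r
      = (4 * k + 2).choose 2 + (2 * k + 1) := by
  rw [sum_Fct_subset (4 * k + 2) 2 {0, 2 * k + 1}]
  · rw [Finset.sum_pair (by omega : 0 ≠ 2 * k + 1)]
    rw [Fct_zero 2 _ (by omega)]
    congr 1
    rw [Fct_pt 2 (4 * k + 2) (2 * k + 1) (2 * k + 1) 2 (Nat.gcd_eq_left ⟨2, by ring⟩)
      (by ring) (by omega) (by norm_num)]
    norm_num
  · intro x hx
    simp only [Finset.mem_insert, Finset.mem_singleton] at hx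
    rw [Finset.mem_range]
    omega
  · intro r hr hns hdvd
    obtain ⟨e, t, hea, he0, hmul, hrt, hte⟩ := point_analysis _ 2 r hr (by omega) hdvd
    simp only [Finset.mem_insert, Finset.mem_singleton, not_or] at hns
    have he : e = 1 ∨ e = 2 := by
      have := Nat.le_of_dvd (by norm_num) hea
      interval_cases e
      · left; rfl
      · right; rfl
    rcases he with rfl | rfl
    · have : Nat.gcd r (4 * k + 2) = 4 * k + 2 := by omega
      rw [this] at hrt
      interval_cases t
      simp at hrt
      exact hns.1 hrt
    · have : Nat.gcd r (4 * k + 2) = 2 * k + 1 := by omega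
      rw [this] at hrt
      interval_cases t <;> omega

lemma sum3 (k : ℕ) :
    ∑ r ∈ Finset.range (3 * k + 3), Fct 3 (3 * k + 3) r
      = (3 * k + 3).choose 3 + 2 * (k + 1) := by
  rw [sum_Fct_subset (3 * k + 3) 3 {0, k + 1, 2 * k + 2}]
  · rw [show ({0, k + 1, 2 * k + 2} : Finset ℕ) = insert 0 (insert (k+1) {2*k+2}) from rfl]
    rw [Finset.sum_insert (by simp only [Finset.mem_insert, Finset.mem_singleton]; omega), Finset.sum_insert (by simp only [Finset.mem_insert, Finset.mem_singleton]; omega),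
      Finset.sum_singleton]
    rw [Fct_zero 3 _ (by omega)]
    rw [Fct_pt 3 (3 * k + 3) (k + 1) (k + 1) 3 (Nat.gcd_eq_left ⟨3, by ring⟩)
      (by ring) (by omega) (by norm_num)]
    rw [Fct_pt 3 (3 * k + 3) (2 * k + 2) (k + 1) 3 ?hg (by ring) (by omega) (by norm_num)]
    case hg =>
      rw [show 2 * k + 2 = (k + 1) * 2 by ring, show 3 * k + 3 = (k + 1) * 3 by ring,
        Nat.gcd_mul_left]
      norm_num
    norm_num
    try ring
  · intro x hx
    simp only [Finset.mem_insert, Finset.mem_singleton] at hx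
    rw [Finset.mem_range]
    omega
  · intro r hr hns hdvd
    obtain ⟨e, t, hea, he0, hmul, hrt, hte⟩ := point_analysis _ 3 r hr (by omega) hdvd
    simp only [Finset.mem_insert, Finset.mem_singleton, not_or] at hns
    have he : e = 1 ∨ e = 3 := by
      have := Nat.le_of_dvd (by norm_num) hea
      interval_cases e
      · left; rfl
      · exfalso; revert hea; norm_num
      · right; rfl
    rcases he with rfl | rfl
    · have : Nat.gcd r (3 * k + 3) = 3 * k + 3 := by omega
      rw [this] at hrt
      interval_cases t
      simp at hrt
      exact hns.1 hrt
    · have : Nat.gcd r (3 * k + 3) = k + 1 := by omega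
      rw [this] at hrt
      interval_cases t <;> omega

lemma sum4e (j : ℕ) :
    ∑ r ∈ Finset.range (4 * j + 4), Fct 4 (4 * j + 4) r
      = (4 * j + 4).choose 4 + (2 * j + 2).choose 2 + (2 * j + 2) := by
  rw [sum_Fct_subset (4 * j + 4) 4 {0, j + 1, 2 * j + 2, 3 * j + 3}]
  · rw [show ({0, j + 1, 2 * j + 2, 3 * j + 3} : Finset ℕ)
        = insert 0 (insert (j+1) (insert (2*j+2) {3*j+3})) from rfl]
    rw [Finset.sum_insert (by simp only [Finset.mem_insert, Finset.mem_singleton]; omega), Finset.sum_insert (by simp only [Finset.mem_insert, Finset.mem_singleton]; omega),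
      Finset.sum_insert (by simp only [Finset.mem_insert, Finset.mem_singleton]; omega), Finset.sum_singleton]
    rw [Fct_zero 4 _ (by omega)]
    rw [Fct_pt 4 (4 * j + 4) (j + 1) (j + 1) 4 (Nat.gcd_eq_left ⟨4, by ring⟩)
      (by ring) (by omega) (by norm_num)]
    rw [Fct_pt 4 (4 * j + 4) (2 * j + 2) (2 * j + 2) 2 ?hg2 (by ring) (by omega) (by norm_num)]
    case hg2 =>
      rw [show 2 * j + 2 = (2 * j + 2) * 1 by ring, show 4 * j + 4 = (2 * j + 2) * 2 by ring,
        Nat.gcd_mul_left]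
      norm_num
    rw [Fct_pt 4 (4 * j + 4) (3 * j + 3) (j + 1) 4 ?hg3 (by ring) (by omega) (by norm_num)]
    case hg3 =>
      rw [show 3 * j + 3 = (j + 1) * 3 by ring, show 4 * j + 4 = (j + 1) * 4 by ring,
        Nat.gcd_mul_left]
      norm_num
    norm_num
    try ring
  · intro x hx
    simp only [Finset.mem_insert, Finset.mem_singleton] at hx
    rw [Finset.mem_range]
    omega
  · intro r hr hns hdvd
    obtain ⟨e, t, hea, he0, hmul, hrt, hte⟩ := point_analysis _ 4 r hr (by omega) hdvd
    simp only [Finset.mem_insert, Finset.mem_singleton, not_or] at hns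
    have he : e = 1 ∨ e = 2 ∨ e = 4 := by
      have := Nat.le_of_dvd (by norm_num) hea
      interval_cases e
      · left; rfl
      · right; left; rfl
      · exfalso; revert hea; norm_num
      · right; right; rfl
    rcases he with rfl | rfl | rfl
    · have : Nat.gcd r (4 * j + 4) = 4 * j + 4 := by omega
      rw [this] at hrt
      interval_cases t
      simp at hrt
      exact hns.1 hrt
    · have : Nat.gcd r (4 * j + 4) = 2 * j + 2 := by omega
      rw [this] at hrt
      interval_cases t <;> omega
    · have : Nat.gcd r (4 * j + 4) = j + 1 := by omega
      rw [this] at hrt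
      interval_cases t <;> omega

lemma sum4o (j : ℕ) :
    ∑ r ∈ Finset.range (4 * j + 6), Fct 4 (4 * j + 6) r
      = (4 * j + 6).choose 4 + (2 * j + 3).choose 2 := by
  rw [sum_Fct_subset (4 * j + 6) 4 {0, 2 * j + 3}]
  · rw [Finset.sum_pair (by omega : 0 ≠ 2 * j + 3)]
    rw [Fct_zero 4 _ (by omega)]
    rw [Fct_pt 4 (4 * j + 6) (2 * j + 3) (2 * j + 3) 2 (Nat.gcd_eq_left ⟨2, by ring⟩)
      (by ring) (by omega) (by norm_num)]
  · intro x hx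
    simp only [Finset.mem_insert, Finset.mem_singleton] at hx
    rw [Finset.mem_range]
    omega
  · intro r hr hns hdvd
    obtain ⟨e, t, hea, he0, hmul, hrt, hte⟩ := point_analysis _ 4 r hr (by omega) hdvd
    simp only [Finset.mem_insert, Finset.mem_singleton, not_or] at hns
    have he : e = 1 ∨ e = 2 ∨ e = 4 := by
      have := Nat.le_of_dvd (by norm_num) hea
      interval_cases e
      · left; rfl
      · right; left; rfl
      · exfalso; revert hea; norm_num
      · right; right; rfl
    rcases he with rfl | rfl | rfl
    · have : Nat.gcd r (4 * j + 6) = 4 * j + 6 := by omega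
      rw [this] at hrt
      interval_cases t
      simp at hrt
      exact hns.1 hrt
    · have : Nat.gcd r (4 * j + 6) = 2 * j + 3 := by omega
      rw [this] at hrt
      interval_cases t <;> omega
    · omega

lemma sum5a (k : ℕ) (h5 : ¬ 5 ∣ k) :
    ∑ r ∈ Finset.range (k + 5), Fct 5 (k + 5) r = (k + 5).choose 5 := by
  rw [sum_Fct_subset (k + 5) 5 {0}]
  · rw [Finset.sum_singleton, Fct_zero 5 _ (by omega)]
  · intro x hx
    simp only [Finset.mem_singleton] at hx
    rw [Finset.mem_range]
    omega
  · intro r hr hns hdvd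
    obtain ⟨e, t, hea, he0, hmul, hrt, hte⟩ := point_analysis _ 5 r hr (by omega) hdvd
    simp only [Finset.mem_singleton] at hns
    have he : e = 1 ∨ e = 5 := by
      have := Nat.le_of_dvd (by norm_num) hea
      interval_cases e
      · left; rfl
      · exfalso; revert hea; norm_num
      · exfalso; revert hea; norm_num
      · exfalso; revert hea; norm_num
      · right; rfl
    rcases he with rfl | rfl
    · have : Nat.gcd r (k + 5) = k + 5 := by omega
      rw [this] at hrt
      interval_cases t
      simp at hrt
      exact hns hrt
    · exact h5 (by omega)

lemma sum5b (m : ℕ) :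
    ∑ r ∈ Finset.range (5 * m + 5), Fct 5 (5 * m + 5) r
      = (5 * m + 5).choose 5 + 4 * (m + 1) := by
  rw [sum_Fct_subset (5 * m + 5) 5 {0, m + 1, 2 * m + 2, 3 * m + 3, 4 * m + 4}]
  · rw [show ({0, m + 1, 2 * m + 2, 3 * m + 3, 4 * m + 4} : Finset ℕ)
        = insert 0 (insert (m+1) (insert (2*m+2) (insert (3*m+3) {4*m+4}))) from rfl]
    rw [Finset.sum_insert (by simp only [Finset.mem_insert, Finset.mem_singleton]; omega), Finset.sum_insert (by simp only [Finset.mem_insert, Finset.mem_singleton]; omega),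
      Finset.sum_insert (by simp only [Finset.mem_insert, Finset.mem_singleton]; omega), Finset.sum_insert (by simp only [Finset.mem_insert, Finset.mem_singleton]; omega),
      Finset.sum_singleton]
    rw [Fct_zero 5 _ (by omega)]
    rw [Fct_pt 5 (5 * m + 5) (m + 1) (m + 1) 5 (Nat.gcd_eq_left ⟨5, by ring⟩)
      (by ring) (by omega) (by norm_num)]
    rw [Fct_pt 5 (5 * m + 5) (2 * m + 2) (m + 1) 5 ?hg2 (by ring) (by omega) (by norm_num)]
    case hg2 =>
      rw [show 2 * m + 2 = (m + 1) * 2 by ring, show 5 * m + 5 = (m + 1) * 5 by ring,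
        Nat.gcd_mul_left]
      norm_num
    rw [Fct_pt 5 (5 * m + 5) (3 * m + 3) (m + 1) 5 ?hg3 (by ring) (by omega) (by norm_num)]
    case hg3 =>
      rw [show 3 * m + 3 = (m + 1) * 3 by ring, show 5 * m + 5 = (m + 1) * 5 by ring,
        Nat.gcd_mul_left]
      norm_num
    rw [Fct_pt 5 (5 * m + 5) (4 * m + 4) (m + 1) 5 ?hg4 (by ring) (by omega) (by norm_num)]
    case hg4 =>
      rw [show 4 * m + 4 = (m + 1) * 4 by ring, show 5 * m + 5 = (m + 1) * 5 by ring,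
        Nat.gcd_mul_left]
      norm_num
    norm_num
    try ring
  · intro x hx
    simp only [Finset.mem_insert, Finset.mem_singleton] at hx
    rw [Finset.mem_range]
    omega
  · intro r hr hns hdvd
    obtain ⟨e, t, hea, he0, hmul, hrt, hte⟩ := point_analysis _ 5 r hr (by omega) hdvd
    simp only [Finset.mem_insert, Finset.mem_singleton, not_or] at hns
    have he : e = 1 ∨ e = 5 := by
      have := Nat.le_of_dvd (by norm_num) hea
      interval_cases e
      · left; rfl
      · exfalso; revert hea; norm_num
      · exfalso; revert hea; norm_num
      · exfalso; revert hea; norm_num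
      · right; rfl
    rcases he with rfl | rfl
    · have : Nat.gcd r (5 * m + 5) = 5 * m + 5 := by omega
      rw [this] at hrt
      interval_cases t
      simp at hrt
      exact hns.1 hrt
    · have : Nat.gcd r (5 * m + 5) = m + 1 := by omega
      rw [this] at hrt
      interval_cases t <;> omega

lemma sum6 : ∑ r ∈ Finset.range 6, Fct 6 6 r = 6 := by decide


lemma burnside' (a b : ℕ) (h : 0 < a + b) :
    necklaceNum a b * (a + b) = ∑ r ∈ Finset.range (a + b), Fct a (a + b) r := by
  haveI : NeZero (a + b) := ⟨by omega⟩
  rw [burnside a b]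
  rw [← Fin.sum_univ_eq_sum_range (fun r => Fct a (a + b) r) (a + b)]
  rfl

-- choose product identities
lemma factorial2 : (2:ℕ).factorial = 2 := rfl
lemma choose2_eq (m : ℕ) : (m + 2).choose 2 * 2 = (m + 2) * (m + 1) := by
  have h := Nat.add_choose_mul_factorial_mul_factorial m 2
  have hf : (m + 2).factorial = ((m + 2) * (m + 1)) * m.factorial := by
    rw [show m + 2 = (m + 1) + 1 from rfl, Nat.factorial_succ, Nat.factorial_succ]; ring
  apply Nat.eq_of_mul_eq_mul_right (Nat.factorial_pos m)
  calc ((m + 2).choose 2 * 2) * m.factorial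
      = (m + 2).choose 2 * m.factorial * (2:ℕ).factorial := by rw [factorial2]; ring
    _ = (m + 2).factorial := h
    _ = ((m + 2) * (m + 1)) * m.factorial := hf

lemma choose3_eq (m : ℕ) : (m + 3).choose 3 * 6 = (m + 3) * (m + 2) * (m + 1) := by
  have h := Nat.add_choose_mul_factorial_mul_factorial m 3
  have hf : (m + 3).factorial = ((m + 3) * (m + 2) * (m + 1)) * m.factorial := by
    rw [show m + 3 = (m + 2) + 1 from rfl, Nat.factorial_succ,
      show m + 2 = (m + 1) + 1 from rfl, Nat.factorial_succ, Nat.factorial_succ]; ring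
  apply Nat.eq_of_mul_eq_mul_right (Nat.factorial_pos m)
  calc ((m + 3).choose 3 * 6) * m.factorial
      = (m + 3).choose 3 * m.factorial * (3:ℕ).factorial := by
        rw [show (3:ℕ).factorial = 6 from rfl]; ring
    _ = (m + 3).factorial := h
    _ = ((m + 3) * (m + 2) * (m + 1)) * m.factorial := hf

lemma choose4_eq (m : ℕ) : (m + 4).choose 4 * 24 = (m + 4) * (m + 3) * (m + 2) * (m + 1) := by
  have h := Nat.add_choose_mul_factorial_mul_factorial m 4
  have hf : (m + 4).factorial = ((m + 4) * (m + 3) * (m + 2) * (m + 1)) * m.factorial := by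
    rw [show m + 4 = (m + 3) + 1 from rfl, Nat.factorial_succ,
      show m + 3 = (m + 2) + 1 from rfl, Nat.factorial_succ,
      show m + 2 = (m + 1) + 1 from rfl, Nat.factorial_succ, Nat.factorial_succ]; ring
  apply Nat.eq_of_mul_eq_mul_right (Nat.factorial_pos m)
  calc ((m + 4).choose 4 * 24) * m.factorial
      = (m + 4).choose 4 * m.factorial * (4:ℕ).factorial := by
        rw [show (4:ℕ).factorial = 24 from rfl]; ring
    _ = (m + 4).factorial := h
    _ = ((m + 4) * (m + 3) * (m + 2) * (m + 1)) * m.factorial := hf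

lemma choose5_eq (m : ℕ) :
    (m + 5).choose 5 * 120 = (m + 5) * (m + 4) * (m + 3) * (m + 2) * (m + 1) := by
  have h := Nat.add_choose_mul_factorial_mul_factorial m 5
  have hf : (m + 5).factorial
      = ((m + 5) * (m + 4) * (m + 3) * (m + 2) * (m + 1)) * m.factorial := by
    rw [show m + 5 = (m + 4) + 1 from rfl, Nat.factorial_succ,
      show m + 4 = (m + 3) + 1 from rfl, Nat.factorial_succ,
      show m + 3 = (m + 2) + 1 from rfl, Nat.factorial_succ,
      show m + 2 = (m + 1) + 1 from rfl, Nat.factorial_succ, Nat.factorial_succ]; ring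
  apply Nat.eq_of_mul_eq_mul_right (Nat.factorial_pos m)
  calc ((m + 5).choose 5 * 120) * m.factorial
      = (m + 5).choose 5 * m.factorial * (5:ℕ).factorial := by
        rw [show (5:ℕ).factorial = 120 from rfl]; ring
    _ = (m + 5).factorial := h
    _ = ((m + 5) * (m + 4) * (m + 3) * (m + 2) * (m + 1)) * m.factorial := hf

-- necklace values
lemma V0 (k : ℕ) (hk : 0 < k) : necklaceNum 0 (6 * k) = 1 := by
  have h := burnside' 0 (6 * k) (by omega)
  rw [show 0 + 6 * k = 6 * k by ring] at h
  rw [sum0 (6 * k) (by omega)] at h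
  have : necklaceNum 0 (6 * k) * (6 * k) = 1 * (6 * k) := by omega
  exact Nat.eq_of_mul_eq_mul_right (by omega) this

lemma V1 (k : ℕ) : necklaceNum 1 (5 * k) = 1 := by
  have h := burnside' 1 (5 * k) (by omega)
  rw [show 1 + 5 * k = 5 * k + 1 by ring] at h
  rw [sum1 (5 * k + 1) (by omega)] at h
  have : necklaceNum 1 (5 * k) * (5 * k + 1) = 1 * (5 * k + 1) := by omega
  exact Nat.eq_of_mul_eq_mul_right (by omega) this

lemma V2 (k : ℕ) : necklaceNum 2 (4 * k) = 2 * k + 1 := by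
  have h := burnside' 2 (4 * k) (by omega)
  rw [show 2 + 4 * k = 4 * k + 2 by ring, sum2' k] at h
  have hc : (4 * k + 2).choose 2 = (2 * k + 1) * (4 * k + 1) := by
    apply Nat.eq_of_mul_eq_mul_right (show 0 < 2 by norm_num)
    rw [show 4 * k + 2 = 4 * k + 2 from rfl]
    calc (4 * k + 2).choose 2 * 2 = (4 * k + 2) * (4 * k + 1) := choose2_eq (4 * k)
      _ = (2 * k + 1) * (4 * k + 1) * 2 := by ring
  rw [hc] at h
  have h2 : necklaceNum 2 (4 * k) * (4 * k + 2) = (2 * k + 1) * (4 * k + 2) := by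
    rw [h]; ring
  exact Nat.eq_of_mul_eq_mul_right (by omega) h2

lemma V6 : necklaceNum 6 0 = 1 := by
  have h := burnside' 6 0 (by omega)
  rw [show 6 + 0 = 6 from rfl, sum6] at h
  omega

lemma E3 (k : ℕ) :
    necklaceNum 3 (3 * k) * (3 * k + 3) = (3 * k + 3).choose 3 + 2 * (k + 1) := by
  have h := burnside' 3 (3 * k) (by omega)
  rw [show 3 + 3 * k = 3 * k + 3 by ring, sum3 k] at h
  exact h

lemma E4e (j : ℕ) :
    necklaceNum 4 (2 * (2 * j)) * (4 * j + 4)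
      = (4 * j + 4).choose 4 + (2 * j + 2).choose 2 + (2 * j + 2) := by
  have h := burnside' 4 (2 * (2 * j)) (by omega)
  rw [show 4 + 2 * (2 * j) = 4 * j + 4 by ring, sum4e j] at h
  exact h

lemma E4o (j : ℕ) :
    necklaceNum 4 (2 * (2 * j + 1)) * (4 * j + 6)
      = (4 * j + 6).choose 4 + (2 * j + 3).choose 2 := by
  have h := burnside' 4 (2 * (2 * j + 1)) (by omega)
  rw [show 4 + 2 * (2 * j + 1) = 4 * j + 6 by ring, sum4o j] at h
  exact h

lemma E5a (k : ℕ) (h5 : ¬ 5 ∣ k) :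
    necklaceNum 5 k * (k + 5) = (k + 5).choose 5 := by
  have h := burnside' 5 k (by omega)
  rw [show 5 + k = k + 5 by ring, sum5a k h5] at h
  exact h

lemma E5b (m : ℕ) :
    necklaceNum 5 (5 * m) * (5 * m + 5) = (5 * m + 5).choose 5 + 4 * (m + 1) := by
  have h := burnside' 5 (5 * m) (by omega)
  rw [show 5 + 5 * m = 5 * m + 5 by ring, sum5b m] at h
  exact h


theorem Cnk_three_closed_form (k : ℕ) (hk : 2 ≤ k) :
    (Cnk 3 k : ℚ) =
      (1 / 60) * (k : ℚ) ^ 4 + (5 / 6) * (k : ℚ) ^ 3 + (67 / 12) * (k : ℚ) ^ 2 +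
        (61 / 6) * (k : ℚ) + 57 / 5 +
        (if 2 ∣ k then (1 : ℚ) else 0) + (if 5 ∣ k then (8 / 5 : ℚ) else 0) := by
  have hsum : Cnk 3 k = 2 * (necklaceNum 0 (6 * k) + necklaceNum 1 (5 * k)
      + necklaceNum 2 (4 * k) + necklaceNum 3 (3 * k) + necklaceNum 4 (2 * k)
      + necklaceNum 5 (1 * k) + necklaceNum 6 (0 * k)) := by
    unfold Cnk
    norm_num [Finset.sum_range_succ]
    try ring
  rw [hsum, V0 k (by omega), V1 k, V2 k]
  rw [show (1 : ℕ) * k = k by ring, show (0 : ℕ) * k = 0 by ring, V6]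
  -- rationalize
  have c3 := E3 k
  have hc3 := choose3_eq (3 * k)
  have hq3 : (necklaceNum 3 (3 * k) : ℚ)
      = ((3 * (k:ℚ) + 3) * (3 * k + 2) * (3 * k + 1) / 6 + 2 * (k + 1)) / (3 * k + 3) := by
    rw [eq_div_iff (by positivity)]
    have := congrArg (Nat.cast : ℕ → ℚ) c3
    push_cast at this
    rw [this]
    have := congrArg (Nat.cast : ℕ → ℚ) hc3
    push_cast at this
    field_simp
    linarith [this]
  -- E4 / E5 with ifs
  have c4 : necklaceNum 4 (2 * k) * (2 * k + 4)
      = (2 * k + 4).choose 4 + (k + 2).choose 2 + (if 2 ∣ k then k + 2 else 0) := by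
    by_cases h : 2 ∣ k
    · obtain ⟨j, rfl⟩ := h
      rw [if_pos ⟨j, rfl⟩]
      rw [show 2 * (2 * j) + 4 = 4 * j + 4 by ring, show 2 * j + 2 = 2 * j + 2 from rfl]
      exact E4e j
    · have hj : ∃ j, k = 2 * j + 1 := ⟨k / 2, by omega⟩
      obtain ⟨j, rfl⟩ := hj
      rw [if_neg h]
      rw [show 2 * (2 * j + 1) + 4 = 4 * j + 6 by ring, show 2 * j + 1 + 2 = 2 * j + 3 by ring]
      rw [E4o j]
      omega
  have c5 : necklaceNum 5 k * (k + 5) * 5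
      = (k + 5).choose 5 * 5 + (if 5 ∣ k then 4 * (k + 5) else 0) := by
    by_cases h : 5 ∣ k
    · obtain ⟨m, rfl⟩ := h
      rw [if_pos ⟨m, rfl⟩]
      rw [show 5 * m + 5 = 5 * m + 5 from rfl, E5b m]
      ring
    · rw [if_neg h, E5a k h]
      omega
  -- choose casts
  have qc2 : (((k + 2).choose 2 : ℕ) : ℚ) = ((k:ℚ) + 2) * (k + 1) / 2 := by
    have h := congrArg (Nat.cast : ℕ → ℚ) (choose2_eq k)
    push_cast at h
    linarith
  have qc4 : (((2 * k + 4).choose 4 : ℕ) : ℚ)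
      = (2 * (k:ℚ) + 4) * (2 * k + 3) * (2 * k + 2) * (2 * k + 1) / 24 := by
    have h := congrArg (Nat.cast : ℕ → ℚ) (choose4_eq (2 * k))
    push_cast at h
    linarith
  have qc5 : (((k + 5).choose 5 : ℕ) : ℚ)
      = ((k:ℚ) + 5) * (k + 4) * (k + 3) * (k + 2) * (k + 1) / 120 := by
    have h := congrArg (Nat.cast : ℕ → ℚ) (choose5_eq k)
    push_cast at h
    linarith
  have hk4 : (2 * (k:ℚ) + 4) ≠ 0 := by positivity
  have hk5 : ((k:ℚ) + 5) ≠ 0 := by positivity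
  by_cases h2 : 2 ∣ k <;> by_cases h5 : 5 ∣ k <;>
    [ (rw [if_pos h2] at c4; rw [if_pos h5] at c5; rw [if_pos h2, if_pos h5]);
      (rw [if_pos h2] at c4; rw [if_neg h5] at c5; rw [if_pos h2, if_neg h5]);
      (rw [if_neg h2] at c4; rw [if_pos h5] at c5; rw [if_neg h2, if_pos h5]);
      (rw [if_neg h2] at c4; rw [if_neg h5] at c5; rw [if_neg h2, if_neg h5])] <;>
  · have hcast4 := congrArg (Nat.cast : ℕ → ℚ) c4
    push_cast at hcast4
    rw [qc4, qc2] at hcast4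
    have q4 : (necklaceNum 4 (2 * k) : ℚ)
        = (necklaceNum 4 (2 * k) : ℚ) * (2 * (k:ℚ) + 4) / (2 * (k:ℚ) + 4) := by
      rw [mul_div_assoc, div_self hk4, mul_one]
    rw [hcast4] at q4
    have hcast5 := congrArg (Nat.cast : ℕ → ℚ) c5
    push_cast at hcast5
    rw [qc5] at hcast5
    have q5 : (necklaceNum 5 k : ℚ)
        = (necklaceNum 5 k : ℚ) * ((k:ℚ) + 5) * 5 / (((k:ℚ) + 5) * 5) := by
      have hne : (((k:ℚ) + 5) * 5) ≠ 0 := by positivity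
      field_simp
    rw [hcast5] at q5
    push_cast
    rw [hq3, q4, q5]
    have h3ne : (3 * (k:ℚ) + 3) ≠ 0 := by positivity
    have h5ne : (((k:ℚ) + 5) * 5) ≠ 0 := by positivity
    field_simp
    ring
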